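/- arXiv:2506.01179 — 9 statements merged into one kernel-verified Lean document; each statement's English description precedes it below -/
import Mathlib

section
/- In the divisor topology D(M), for each m ∈ M^#, the basic open set U_m is the smallest open set containing [m]; consequently D(M) is an Alexandrov space (arbitrary intersections of open sets are open). -/
open Submodule

variable (R M : Type) [CommRing R] [IsDomain R] [AddCommGroup M] [Module R M]

/-- The set of nonzero nongenerators of `M`. -/
def Msharp : Set M := {m | m ≠ 0 ∧ Submodule.span R {m} ≠ ⊤}

/-- Equivalence: `m ∼ n` iff `Rm = Rn`. -/
def divSetoid : Setoid (Msharp R M) :=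
  ⟨fun a b => Submodule.span R {a.1} = Submodule.span R {b.1},
    ⟨fun _ => rfl, fun h => h.symm, fun h₁ h₂ => h₁.trans h₂⟩⟩

/-- `EC(M^#)`: the set of equivalence classes. -/
def EC := Quotient (divSetoid R M)

/-- The class `[n]` of `n ∈ M^#`. -/
def cls (n : Msharp R M) : EC R M := Quotient.mk (divSetoid R M) n

/-- `U_m = {[n] : n ∣ m}` where `n ∣ m` means `m ∈ Rn`. -/
def Uset (m : M) : Set (EC R M) :=
  {c | ∃ n : Msharp R M, cls R M n = c ∧ m ∈ Submodule.span R {n.1}}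

/-- The divisor topology `D(M)`. -/
def divTop : TopologicalSpace (EC R M) :=
  TopologicalSpace.generateFrom {s | ∃ m ∈ Msharp R M, s = Uset R M m}

lemma Uset_isOpen (m : Msharp R M) : (divTop R M).IsOpen (Uset R M m.1) :=
  TopologicalSpace.GenerateOpen.basic _ ⟨m.1, m.2, rfl⟩

lemma cls_mem_Uset (m : Msharp R M) : cls R M m ∈ Uset R M m.1 :=
  ⟨m, rfl, mem_span_singleton_self _⟩

lemma Uset_smallest {O : Set (EC R M)} (hO : (divTop R M).IsOpen O) :
    ∀ m : Msharp R M, cls R M m ∈ O → Uset R M m.1 ⊆ O := by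
  induction hO with
  | basic s hs =>
    obtain ⟨k, hk, rfl⟩ := hs
    intro m hm c hc
    obtain ⟨n, hn, hkn⟩ := hm
    have hspan : Submodule.span R {n.1} = Submodule.span R {m.1} :=
      Quotient.exact hn
    obtain ⟨p, hp, hmp⟩ := hc
    refine ⟨p, hp, ?_⟩
    have h1 : Submodule.span R {m.1} ≤ Submodule.span R {p.1} :=
      span_le.2 (Set.singleton_subset_iff.2 hmp)
    exact h1 (hspan ▸ hkn)
  | univ => intro m _; exact fun c _ => trivial
  | inter s t _ _ ihs iht =>
    intro m hm
    exact Set.subset_inter (ihs m hm.1) (iht m hm.2)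
  | sUnion S _ ih =>
    intro m hm
    obtain ⟨s, hsS, hms⟩ := hm
    exact (ih s hsS m hms).trans (Set.subset_sUnion_of_mem hsS)

/-- `U_m` is the smallest open set containing `[m]`; consequently `D(M)` is an
Alexandrov space. -/
theorem Uset_smallest_open_and_alexandrov [Nontrivial M] :
    (∀ m : Msharp R M,
      (divTop R M).IsOpen (Uset R M m.1) ∧ cls R M m ∈ Uset R M m.1 ∧
      ∀ O : Set (EC R M), (divTop R M).IsOpen O → cls R M m ∈ O → Uset R M m.1 ⊆ O) ∧
    (@AlexandrovDiscrete (EC R M) (divTop R M)) := by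
  constructor
  · intro m
    exact ⟨Uset_isOpen R M m, cls_mem_Uset R M m,
      fun O hO hm => Uset_smallest R M hO m hm⟩
  · letI := divTop R M
    refine ⟨fun S hS => ?_⟩
    have : ⋂₀ S = ⋃ m ∈ {m : Msharp R M | cls R M m ∈ ⋂₀ S}, Uset R M m.1 := by
      apply Set.Subset.antisymm
      · intro c hc
        obtain ⟨m, hm⟩ := Quotient.exists_rep c
        have hm' : cls R M m = c := hm
        refine Set.mem_biUnion (show cls R M m ∈ ⋂₀ S from hm' ▸ hc) ?_
        exact hm' ▸ cls_mem_Uset R M m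
      · intro c hc
        obtain ⟨m, hm, hcm⟩ := Set.mem_iUnion₂.1 hc
        intro s hs
        exact Uset_smallest R M (hS s hs) m (hm s hs) hcm
    rw [this]
    exact isOpen_biUnion fun m _ => Uset_isOpen R M m
end

section
/- A class [m] ∈ EC(M^#) is an isolated point of the divisor topology D(M) if and only if m is irreducible on M^#, i.e., whenever m₁ ∈ M^# divides m, then m divides m₁. -/
open Submodule

variable (R M : Type) [CommRing R] [IsDomain R] [AddCommGroup M] [Module R M]

/-- Key stability property: generate-open sets are "closed under passing to divisors". -/
lemma generateOpen_divisor {U : Set (EC R M)}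
    (hU : TopologicalSpace.GenerateOpen {s | ∃ m ∈ Msharp R M, s = Uset R M m} U) :
    ∀ a b : Msharp R M, cls R M a ∈ U → a.1 ∈ Submodule.span R {b.1} → cls R M b ∈ U := by
  induction hU with
  | basic s hs =>
      rintro a b ha hab
      obtain ⟨m', _, rfl⟩ := hs
      obtain ⟨n, hn, hm'⟩ := ha
      have hspan : Submodule.span R {n.1} = Submodule.span R {a.1} := Quotient.exact hn
      refine ⟨b, rfl, ?_⟩
      have h1 : m' ∈ Submodule.span R {a.1} := hspan ▸ hm'
      have h2 : Submodule.span R {a.1} ≤ Submodule.span R {b.1} :=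
        (Submodule.span_singleton_le_iff_mem _ _).2 hab
      exact h2 h1
  | univ => intro a b _ _; trivial
  | inter s t _ _ ihs iht =>
      intro a b ha hab
      exact ⟨ihs a b ha.1 hab, iht a b ha.2 hab⟩
  | sUnion S _ ih =>
      rintro a b ⟨s, hs, ha⟩ hab
      exact ⟨s, hs, ih s hs a b ha hab⟩

/-- `[m]` is an isolated point of `D(M)` iff `m` is irreducible on `M^#`,
i.e. whenever `m₁ ∈ M^#` divides `m`, then `m` divides `m₁`. -/
theorem isolated_iff_irreducible [Nontrivial M] (m : Msharp R M) :
    (divTop R M).IsOpen {cls R M m} ↔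
      ∀ m₁ : Msharp R M, m.1 ∈ Submodule.span R {m₁.1} → m₁.1 ∈ Submodule.span R {m.1} := by
  constructor
  · intro h m₁ hm₁
    have hmem : cls R M m₁ ∈ ({cls R M m} : Set (EC R M)) :=
      generateOpen_divisor R M h m m₁ rfl hm₁
    have : Submodule.span R {m₁.1} = Submodule.span R {m.1} :=
      Quotient.exact (hmem : cls R M m₁ = cls R M m)
    exact this ▸ Submodule.mem_span_singleton_self _
  · intro hirr
    have hset : ({cls R M m} : Set (EC R M)) = Uset R M m.1 := by
      ext c
      constructor
      · rintro rfl
        exact ⟨m, rfl, Submodule.mem_span_singleton_self _⟩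
      · rintro ⟨n, rfl, hmn⟩
        have h1 : n.1 ∈ Submodule.span R {m.1} := hirr n hmn
        have h2 : Submodule.span R {n.1} = Submodule.span R {m.1} :=
          le_antisymm ((Submodule.span_singleton_le_iff_mem _ _).2 h1)
            ((Submodule.span_singleton_le_iff_mem _ _).2 hmn)
        exact Quotient.sound h2
    rw [hset]
    exact TopologicalSpace.GenerateOpen.basic _ ⟨m.1, m.2, rfl⟩
end

section
/- Let M be a module over an integral domain R. The divisor topology D(M) is a nested space (its open sets are totally ordered by inclusion) if and only if M is a uniserial module. -/
open Submodule

variable (R M : Type) [CommRing R] [IsDomain R] [AddCommGroup M] [Module R M]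

/-- Unions of subfamilies of a chain are comparable. -/
lemma chain_sUnion_comparable {α : Type*} {S : Set (Set α)}
    (hS : ∀ s ∈ S, ∀ t ∈ S, s ⊆ t ∨ t ⊆ s)
    {T₁ T₂ : Set (Set α)} (h₁ : T₁ ⊆ S) (h₂ : T₂ ⊆ S) :
    ⋃₀ T₁ ⊆ ⋃₀ T₂ ∨ ⋃₀ T₂ ⊆ ⋃₀ T₁ := by
  by_cases h : ∀ A ∈ T₁, A ⊆ ⋃₀ T₂
  · left
    rintro x ⟨A, hA, hxA⟩
    exact h A hA hxA
  · push_neg at h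
    obtain ⟨A, hA, hAn⟩ := h
    right
    rintro x ⟨B, hB, hxB⟩
    have hBA : B ⊆ A := by
      rcases hS A (h₁ hA) B (h₂ hB) with hab | hba
      · exact absurd (hab.trans (Set.subset_sUnion_of_mem hB)) hAn
      · exact hba
    exact ⟨A, hA, hBA hxB⟩

/-- Every open of a topology generated by a chain is a union of generating
sets and `univ`. -/
lemma generateOpen_chain {α : Type*} {S : Set (Set α)}
    (hS : ∀ s ∈ S, ∀ t ∈ S, s ⊆ t ∨ t ⊆ s) {O : Set α}
    (hO : TopologicalSpace.GenerateOpen S O) :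
    ∃ T ⊆ insert Set.univ S, O = ⋃₀ T := by
  have hS' : ∀ s ∈ insert Set.univ S, ∀ t ∈ insert Set.univ S, s ⊆ t ∨ t ⊆ s := by
    rintro s (rfl | hs) t (rfl | ht)
    · left; exact le_refl _
    · right; exact Set.subset_univ _
    · left; exact Set.subset_univ _
    · exact hS s hs t ht
  induction hO with
  | basic s hs => exact ⟨{s}, by simpa using Set.mem_insert_of_mem _ hs, by simp⟩
  | univ => exact ⟨{Set.univ}, by simp, by simp⟩
  | inter O₁ O₂ _ _ ih₁ ih₂ =>
      obtain ⟨T₁, hT₁, rfl⟩ := ih₁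
      obtain ⟨T₂, hT₂, rfl⟩ := ih₂
      rcases chain_sUnion_comparable hS' hT₁ hT₂ with h | h
      · exact ⟨T₁, hT₁, Set.inter_eq_self_of_subset_left h⟩
      · exact ⟨T₂, hT₂, Set.inter_eq_self_of_subset_right h⟩
  | sUnion 𝒮 _ ih =>
      choose T hT hTeq using ih
      refine ⟨{A | ∃ t, ∃ ht : t ∈ 𝒮, A ∈ T t ht}, ?_, ?_⟩
      · rintro A ⟨t, ht, hA⟩
        exact hT t ht hA
      · ext x
        constructor
        · rintro ⟨t, ht, hxt⟩
          rw [hTeq t ht] at hxt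
          obtain ⟨A, hA, hxA⟩ := hxt
          exact ⟨A, ⟨t, ht, hA⟩, hxA⟩
        · rintro ⟨A, ⟨t, ht, hA⟩, hxA⟩
          refine ⟨t, ht, ?_⟩
          rw [hTeq t ht]
          exact ⟨A, hA, hxA⟩

/-- `D(M)` is a nested space (open sets totally ordered by inclusion) iff
`M` is a uniserial module. -/
theorem nested_iff_uniserial [Nontrivial M] (hM : ¬ IsSimpleModule R M) :
    (∀ O₁ O₂ : Set (EC R M), (divTop R M).IsOpen O₁ → (divTop R M).IsOpen O₂ →
      O₁ ⊆ O₂ ∨ O₂ ⊆ O₁) ↔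
    (∀ N L : Submodule R M, N ≤ L ∨ L ≤ N) := by
  constructor
  · intro h
    have key : ∀ m n : M, span R {m} ≤ span R {n} ∨ span R {n} ≤ span R {m} := by
      intro m n
      by_cases hm0 : m = 0
      · left; simp [hm0]
      by_cases hn0 : n = 0
      · right; simp [hn0]
      by_cases hmt : span R {m} = ⊤
      · right; rw [hmt]; exact le_top
      by_cases hnt : span R {n} = ⊤
      · left; rw [hnt]; exact le_top
      have hm : m ∈ Msharp R M := ⟨hm0, hmt⟩
      have hn : n ∈ Msharp R M := ⟨hn0, hnt⟩
      have o1 : (divTop R M).IsOpen (Uset R M m) :=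
        TopologicalSpace.GenerateOpen.basic _ ⟨m, hm, rfl⟩
      have o2 : (divTop R M).IsOpen (Uset R M n) :=
        TopologicalSpace.GenerateOpen.basic _ ⟨n, hn, rfl⟩
      have hmem : ∀ (x : M) (hx : x ∈ Msharp R M), cls R M ⟨x, hx⟩ ∈ Uset R M x :=
        fun x hx => ⟨⟨x, hx⟩, rfl, Submodule.mem_span_singleton_self x⟩
      rcases h _ _ o1 o2 with hsub | hsub
      · obtain ⟨n', hcls, hmem'⟩ := hsub (hmem m hm)
        have hsp : span R {n'.1} = span R {m} := Quotient.exact hcls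
        right
        rw [Submodule.span_singleton_le_iff_mem]
        rw [hsp] at hmem'
        exact hmem'
      · obtain ⟨n', hcls, hmem'⟩ := hsub (hmem n hn)
        have hsp : span R {n'.1} = span R {n} := Quotient.exact hcls
        left
        rw [Submodule.span_singleton_le_iff_mem]
        rw [hsp] at hmem'
        exact hmem'
    intro N L
    by_cases hNL : N ≤ L
    · exact Or.inl hNL
    · right
      obtain ⟨n, hnN, hnL⟩ := Set.not_subset.mp hNL
      intro l hl
      rcases key n l with hle | hle
      · exact absurd (hle (Submodule.mem_span_singleton_self n))
          (fun hc => hnL ((Submodule.span_singleton_le_iff_mem l L).mpr hl hc))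
      · exact (Submodule.span_singleton_le_iff_mem n N).mpr hnN
          (hle (Submodule.mem_span_singleton_self l))
  · intro h O₁ O₂ h₁ h₂
    set G : Set (Set (EC R M)) := {s | ∃ m ∈ Msharp R M, s = Uset R M m} with hG
    have hchain : ∀ s ∈ G, ∀ t ∈ G, s ⊆ t ∨ t ⊆ s := by
      rintro s ⟨m, hm, rfl⟩ t ⟨m', hm', rfl⟩
      have sub : ∀ a b : M, span R {b} ≤ span R {a} → Uset R M a ⊆ Uset R M b := by
        intro a b hab
        rintro c ⟨nn, hcls, hmem⟩
        exact ⟨nn, hcls, ((Submodule.span_singleton_le_iff_mem a _).mpr hmem).trans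
          (le_refl _) (hab (Submodule.mem_span_singleton_self b))⟩
      rcases h (span R {m'}) (span R {m}) with hle | hle
      · exact Or.inl (sub m m' hle)
      · exact Or.inr (sub m' m hle)
    have g₁ : TopologicalSpace.GenerateOpen G O₁ := h₁
    have g₂ : TopologicalSpace.GenerateOpen G O₂ := h₂
    obtain ⟨T₁, hT₁, rfl⟩ := generateOpen_chain hchain g₁
    obtain ⟨T₂, hT₂, rfl⟩ := generateOpen_chain hchain g₂
    have hS' : ∀ s ∈ insert Set.univ G, ∀ t ∈ insert Set.univ G, s ⊆ t ∨ t ⊆ s := by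
      rintro s (rfl | hs) t (rfl | ht)
      · left; exact le_refl _
      · right; exact Set.subset_univ _
      · left; exact Set.subset_univ _
      · exact hchain s hs t ht
    exact chain_sUnion_comparable hS' hT₁ hT₂
end

section
/- The ℤ-module ℤ/nℤ (with n > 1) is pseudo simple if and only if n = p, n = p², or n = pq for distinct primes p and q. -/
open Submodule

/-- An `R`-module `M` is pseudo simple if `Rm` is a simple module for every
nonzero `m ∈ M` with `Rm ≠ M`. -/
def PseudoSimple (R M : Type) [CommRing R] [AddCommGroup M] [Module R M] : Prop :=
  ∀ m : M, m ≠ 0 → Submodule.span R {m} ≠ ⊤ →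
    IsSimpleModule R (Submodule.span R {m})

section Aux

variable {n : ℕ} [NeZero n]

lemma span_toAddSubgroup (m : ZMod n) :
    (span ℤ {m}).toAddSubgroup = AddSubgroup.zmultiples m := by
  ext x
  simp [Submodule.mem_span_singleton, AddSubgroup.mem_zmultiples_iff, eq_comm]

lemma key_eq (m : ZMod n) :
    AddSubgroup.toIntSubmodule (AddSubgroup.zmultiples m) = span ℤ {m} := by
  apply SetLike.ext'
  rw [AddSubgroup.coe_toIntSubmodule, ← span_toAddSubgroup, Submodule.coe_toAddSubgroup]

lemma card_span (m : ZMod n) : Nat.card (span ℤ {m}) = addOrderOf m := by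
  have h : Nat.card (span ℤ {m}) = Nat.card ((span ℤ {m}).toAddSubgroup) := rfl
  rw [h, span_toAddSubgroup, Nat.card_zmultiples]

lemma span_eq_top_iff (m : ZMod n) : span ℤ {m} = ⊤ ↔ addOrderOf m = n := by
  constructor
  · intro h
    have h1 := card_span m
    rw [h] at h1
    have h2 : Nat.card (⊤ : Submodule ℤ (ZMod n)) = Nat.card (ZMod n) :=
      Nat.card_congr Submodule.topEquiv.toEquiv
    rw [h2, Nat.card_zmod] at h1
    omega
  · intro h
    have htop : AddSubgroup.zmultiples m = ⊤ := by
      apply AddSubgroup.eq_top_of_card_eq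
      rw [Nat.card_zmultiples, h, Nat.card_zmod]
    rw [eq_top_iff']
    intro x
    have hx : x ∈ AddSubgroup.zmultiples m := htop ▸ AddSubgroup.mem_top x
    rwa [← span_toAddSubgroup, Submodule.mem_toAddSubgroup] at hx

lemma simple_span_iff (m : ZMod n) (hm : m ≠ 0) :
    IsSimpleModule ℤ (span ℤ {m}) ↔ (addOrderOf m).Prime := by
  rw [isSimpleModule_iff_isAtom, ← key_eq, OrderIso.isAtom_iff]
  constructor
  · intro hat
    set d := addOrderOf m with hd
    by_contra hdp
    have hd1 : d ≠ 1 := by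
      simpa [hd, AddMonoid.addOrderOf_eq_one_iff] using hm
    have hd0 : d ≠ 0 := (addOrderOf_pos m).ne'
    set p := d.minFac with hpdef
    have hp : p.Prime := Nat.minFac_prime hd1
    have hpdvd : p ∣ d := Nat.minFac_dvd d
    have hpd : p ≠ d := by
      intro h
      exact hdp (h ▸ hp)
    set m' : ZMod n := (d / p) • m with hm'def
    have hdp0 : d / p ≠ 0 := by
      have := Nat.div_pos (Nat.le_of_dvd (by omega) hpdvd) hp.pos
      omega
    have hord' : addOrderOf m' = p := by
      rw [hm'def, addOrderOf_nsmul' m hdp0, ← hd,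
        Nat.gcd_eq_right (Nat.div_dvd_of_dvd hpdvd),
        Nat.div_div_self hpdvd hd0]
    have hm'0 : m' ≠ 0 := by
      intro h0
      rw [h0, addOrderOf_zero] at hord'
      exact hp.ne_one hord'.symm
    have hle : AddSubgroup.zmultiples m' ≤ AddSubgroup.zmultiples m := by
      rw [AddSubgroup.zmultiples_le]
      exact AddSubgroup.nsmul_mem _ (AddSubgroup.mem_zmultiples m) _
    have hlt : AddSubgroup.zmultiples m' < AddSubgroup.zmultiples m := by
      refine lt_of_le_of_ne hle ?_
      intro h
      have := Nat.card_zmultiples m'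
      rw [h, Nat.card_zmultiples, ← hd, hord'] at this
      exact hpd this.symm
    have hbot := hat.2 _ hlt
    have : m' ∈ (⊥ : AddSubgroup (ZMod n)) := hbot ▸ AddSubgroup.mem_zmultiples m'
    rw [AddSubgroup.mem_bot] at this
    exact hm'0 this
  · intro hp
    constructor
    · intro hbot
      have : m ∈ (⊥ : AddSubgroup (ZMod n)) := hbot ▸ AddSubgroup.mem_zmultiples m
      rw [AddSubgroup.mem_bot] at this
      exact hm this
    · intro K hK
      have hle := hK.le
      have hdvd : Nat.card K ∣ Nat.card (AddSubgroup.zmultiples m) :=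
        AddSubgroup.card_dvd_of_le hle
      rw [Nat.card_zmultiples] at hdvd
      rcases hp.eq_one_or_self_of_dvd _ hdvd with h1 | hpp
      · exact AddSubgroup.eq_bot_of_card_eq _ h1
      · exfalso
        have hsets : (K : Set (ZMod n)) = (AddSubgroup.zmultiples m : Set (ZMod n)) := by
          apply Set.eq_of_subset_of_ncard_le hle
          · rw [← Nat.card_coe_set_eq, ← Nat.card_coe_set_eq]
            have h1 : Nat.card (AddSubgroup.zmultiples m : Set (ZMod n)) =
                Nat.card (AddSubgroup.zmultiples m) := rfl
            have h2 : Nat.card (K : Set (ZMod n)) = Nat.card K := rfl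
            rw [h1, h2, hpp, Nat.card_zmultiples]
        exact hK.ne (SetLike.ext' hsets)

lemma divisor_cond_iff (n : ℕ) (hn : 1 < n) :
    (∀ d : ℕ, d ∣ n → d ≠ 1 → d ≠ n → d.Prime) ↔
      ((∃ p : ℕ, p.Prime ∧ (n = p ∨ n = p ^ 2)) ∨
      (∃ p q : ℕ, p.Prime ∧ q.Prime ∧ p ≠ q ∧ n = p * q)) := by
  constructor
  · intro h
    set p := n.minFac with hpdef
    have hp : p.Prime := Nat.minFac_prime (by omega)
    obtain ⟨m, hm⟩ := Nat.minFac_dvd n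
    by_cases hm1 : m = 1
    · exact Or.inl ⟨p, hp, Or.inl (by rw [hm, hm1, mul_one])⟩
    · have hmd : m ∣ n := ⟨p, by rw [hm, mul_comm]⟩
      have hmn : m ≠ n := by
        intro he
        have hp1 : 1 < p := hp.one_lt
        nlinarith [hm, he]
      have hq := h m hmd hm1 hmn
      by_cases hpm : p = m
      · exact Or.inl ⟨p, hp, Or.inr (by rw [hm, ← hpm, sq])⟩
      · exact Or.inr ⟨p, m, hp, hq, hpm, hm⟩
  · rintro (⟨p, hp, hc⟩ | ⟨p, q, hp, hq, hpq, rfl⟩)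
    · rcases hc with rfl | rfl
      · intro d hd h1 hn'
        rcases (Nat.dvd_prime hp).1 hd with rfl | rfl
        · exact absurd rfl h1
        · exact absurd rfl hn'
      · intro d hd h1 hn'
        obtain ⟨k, hk2, rfl⟩ := (Nat.dvd_prime_pow hp).1 hd
        interval_cases k
        · simp at h1
        · simpa using hp
        · exact absurd rfl hn'
    · intro d hd h1 hn'
      by_cases hpd : p ∣ d
      · obtain ⟨e, rfl⟩ := hpd
        have he : e ∣ q := (mul_dvd_mul_iff_left hp.pos.ne').1 hd
        rcases (Nat.dvd_prime hq).1 he with rfl | rfl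
        · simpa using hp
        · exact absurd rfl hn'
      · have hcop : Nat.Coprime d p :=
          Nat.Coprime.symm ((Nat.Prime.coprime_iff_not_dvd hp).2 hpd)
        have hdq : d ∣ q := (hcop.dvd_mul_left).1 hd
        rcases (Nat.dvd_prime hq).1 hdq with rfl | rfl
        · exact absurd rfl h1
        · exact hq

end Aux

/-- The `ℤ`-module `ℤ/nℤ` (`n > 1`) is pseudo simple iff `n = p`, `n = p²`, or
`n = pq` for distinct primes `p, q`. -/
theorem zmod_pseudoSimple_iff (n : ℕ) (hn : 1 < n) :
    PseudoSimple ℤ (ZMod n) ↔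
      (∃ p : ℕ, p.Prime ∧ (n = p ∨ n = p ^ 2)) ∨
      (∃ p q : ℕ, p.Prime ∧ q.Prime ∧ p ≠ q ∧ n = p * q) := by
  have : NeZero n := ⟨by omega⟩
  rw [← divisor_cond_iff n hn]
  constructor
  · intro h d hdn hd1 hdn'
    set m : ZMod n := ((n / d : ℕ) : ZMod n) with hmdef
    have hord : addOrderOf m = d := by
      rw [hmdef, ZMod.addOrderOf_coe _ (NeZero.ne n),
        Nat.gcd_eq_right (Nat.div_dvd_of_dvd hdn),
        Nat.div_div_self hdn (by omega)]
    have hm0 : m ≠ 0 := by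
      intro h0
      rw [h0, addOrderOf_zero] at hord
      exact hd1 hord.symm
    have htop : span ℤ {m} ≠ ⊤ := by
      rw [Ne, span_eq_top_iff, hord]
      exact hdn'
    have hs := h m hm0 htop
    rw [simple_span_iff m hm0, hord] at hs
    exact hs
  · intro h m hm htop
    rw [simple_span_iff m hm]
    apply h
    · have := addOrderOf_dvd_natCard m
      rwa [Nat.card_zmod] at this
    · simpa [AddMonoid.addOrderOf_eq_one_iff] using hm
    · intro he
      exact htop ((span_eq_top_iff m).2 he)
end

section
/- Let φ : M → N be an R-module homomorphism over a commutative ring R. (i) If M is pseudo simple and φ is surjective, then N is pseudo simple. (ii) If N is pseudo simple and φ is injective, then M is pseudo simple. -/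
open Submodule

/-- Pseudo simplicity passes along surjections forward and injections backward. -/
theorem pseudoSimple_hom (R M N : Type) [CommRing R] [AddCommGroup M] [Module R M]
    [AddCommGroup N] [Module R N] (φ : M →ₗ[R] N) :
    (Function.Surjective φ → PseudoSimple R M → PseudoSimple R N) ∧
    (Function.Injective φ → PseudoSimple R N → PseudoSimple R M) := by
  constructor
  · -- Surjective case
    intro hs hM n hn hnt
    obtain ⟨m, rfl⟩ := hs n
    have hm : m ≠ 0 := by rintro rfl; simp at hn
    have hmap : Submodule.map φ (span R {m}) = span R {φ m} := by
      rw [Submodule.map_span, Set.image_singleton]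
    have hmt : span R {m} ≠ ⊤ := by
      intro h
      apply hnt
      rw [← hmap, h, Submodule.map_top, LinearMap.range_eq_top.mpr hs]
    haveI hsimple := hM m hm hmt
    have hmem : ∀ x : span R {m}, φ x ∈ span R {φ m} := by
      intro x
      rw [← hmap]
      exact Submodule.mem_map_of_mem x.2
    set ψ : span R {m} →ₗ[R] span R {φ m} :=
      (φ.comp (span R {m}).subtype).codRestrict _ hmem with hψ
    have hinj : Function.Injective ψ := by
      rw [← LinearMap.ker_eq_bot]
      rcases eq_bot_or_eq_top (LinearMap.ker ψ) with h | h
      · exact h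
      · exfalso
        have hmmem : m ∈ span R {m} := Submodule.mem_span_singleton_self m
        have : (⟨m, hmmem⟩ : span R {m}) ∈ LinearMap.ker ψ := h ▸ Submodule.mem_top
        have : φ m = 0 := by
          have := congrArg Subtype.val (LinearMap.mem_ker.mp this)
          have h2 : ((ψ ⟨m, hmmem⟩ : span R {φ m}) : N) = φ m := rfl
          rw [h2] at this
          simpa using this
        exact hn this
    have hsurj : Function.Surjective ψ := by
      rintro ⟨y, hy⟩
      rw [← hmap] at hy
      obtain ⟨x, hx, hxy⟩ := hy
      exact ⟨⟨x, hx⟩, Subtype.ext hxy⟩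
    exact IsSimpleModule.congr (LinearEquiv.ofBijective ψ ⟨hinj, hsurj⟩).symm
  · -- Injective case
    intro hi hN m hm hmt
    have hphim : φ m ≠ 0 := by
      intro h
      exact hm (hi (by simp [h]))
    have hmap : Submodule.map φ (span R {m}) = span R {φ m} := by
      rw [Submodule.map_span, Set.image_singleton]
    have hnt : span R {φ m} ≠ ⊤ := by
      intro h
      apply hmt
      have hcm := Submodule.comap_map_eq_of_injective hi (span R {m})
      rw [hmap, h, Submodule.comap_top] at hcm
      exact hcm.symm
    haveI := hN (φ m) hphim hnt
    exact IsSimpleModule.congr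
      ((Submodule.equivMapOfInjective φ hi (span R {m})).trans
        (LinearEquiv.ofEq _ _ hmap))
end

section
/- Let M be a pseudo simple R-module over a commutative ring R and S a multiplicatively closed subset of R such that ann(m) ∩ S = ∅ for all nonzero nongenerator m ∈ M. Then the localization S⁻¹M is a pseudo simple S⁻¹R-module. -/
open Submodule

private theorem loc_mk_surj {R : Type} [CommRing R] (S : Submonoid R)
    (c : Localization S) : ∃ p : R × S, c = Localization.mk p.1 p.2 :=
  Localization.induction_on c fun p => ⟨p, rfl⟩

/-- If `M` is pseudo simple and `ann(m) ∩ S = ∅` for all nonzero nongenerators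
`m`, then `S⁻¹M` is a pseudo simple `S⁻¹R`-module. -/
theorem pseudoSimple_localization (R M : Type) [CommRing R] [AddCommGroup M]
    [Module R M] (S : Submonoid R) (hM : PseudoSimple R M)
    (h : ∀ m : M, m ≠ 0 → Submodule.span R {m} ≠ ⊤ → ∀ s ∈ S, s • m ≠ 0) :
    PseudoSimple (Localization S) (LocalizedModule S M) := by
  intro x hx hxtop
  revert hx hxtop
  induction x using LocalizedModule.induction_on with
  | _ m s =>
  intro hx hxtop
  rw [isSimpleModule_iff_isAtom]
  have hm0 : m ≠ 0 := by rintro rfl; exact hx (LocalizedModule.zero_mk s)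
  have hspan : span R {m} ≠ ⊤ := by
    intro htop
    apply hxtop
    rw [eq_top_iff]
    rintro z -
    induction z using LocalizedModule.induction_on with
    | _ n t =>
      have hn : n ∈ span R {m} := htop ▸ mem_top
      obtain ⟨r, rfl⟩ := mem_span_singleton.mp hn
      have key : LocalizedModule.mk (r • m) t
          = (Localization.mk ((s : R) * r) t) • LocalizedModule.mk m s := by
        rw [LocalizedModule.mk_smul_mk]
        apply LocalizedModule.mk_eq.mpr
        refine ⟨1, ?_⟩
        simp only [one_smul, Submonoid.smul_def, Submonoid.coe_mul, smul_smul]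
        congr 1
        ring
      rw [key]
      exact smul_mem _ _ (mem_span_singleton_self _)
  have hatom : IsAtom (span R {m}) := isSimpleModule_iff_isAtom.mp (hM m hm0 hspan)
  constructor
  · intro hbot
    exact hx (span_singleton_eq_bot.mp hbot)
  · intro P hP
    by_contra hPbot
    obtain ⟨y, hyP, hy0⟩ := Submodule.exists_mem_ne_zero_of_ne_bot hPbot
    obtain ⟨c, rfl⟩ := mem_span_singleton.mp (hP.le hyP)
    obtain ⟨⟨r, t⟩, rfl⟩ := loc_mk_surj S c
    rw [LocalizedModule.mk_smul_mk] at hyP hy0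
    have hrm : r • m ≠ 0 := by
      rintro hrm
      exact hy0 (by rw [hrm, LocalizedModule.zero_mk])
    have hle : span R {r • m} ≤ span R {m} :=
      span_le.mpr (by simpa using mem_span_singleton.mpr ⟨r, rfl⟩)
    have heq : span R {r • m} = span R {m} := by
      rcases hle.lt_or_eq with hlt | heq
      · exact absurd (hatom.2 _ hlt) (by simpa [span_singleton_eq_bot] using hrm)
      · exact heq
    have hm_mem : m ∈ span R {r • m} := heq ▸ mem_span_singleton_self m
    obtain ⟨a, ha⟩ := mem_span_singleton.mp hm_mem
    have key : LocalizedModule.mk m s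
        = (Localization.mk (a * (t : R)) (1 : S)) • LocalizedModule.mk (r • m) (t * s) := by
      rw [LocalizedModule.mk_smul_mk, one_mul]
      apply LocalizedModule.mk_eq.mpr
      refine ⟨1, ?_⟩
      simp only [one_smul, Submonoid.smul_def, Submonoid.coe_mul, OneMemClass.coe_one,
        one_mul, smul_smul]
      conv_rhs => rw [show (s : R) * (a * ↑t * r) = ↑t * ↑s * (a * r) by ring,
        mul_smul, mul_smul, mul_smul a r, ha, ← mul_smul]
    have hmem : LocalizedModule.mk m s ∈ P := key ▸ smul_mem P _ hyP
    exact hP.not_ge ((span_singleton_le_iff_mem _ _).mpr hmem)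
end

section
/- Let M be a module over an integral domain R. The divisor topology D(M) is a T1-space if and only if M is a pseudo simple R-module. -/
open Submodule

variable (R M : Type) [CommRing R] [IsDomain R] [AddCommGroup M] [Module R M]

lemma cls_eq_iff (a b : Msharp R M) :
    cls R M a = cls R M b ↔ Submodule.span R {a.1} = Submodule.span R {b.1} := by
  constructor
  · exact fun h => Quotient.exact h
  · exact fun h => Quotient.sound h

lemma openUp (a b : Msharp R M) (hab : a.1 ∈ Submodule.span R {b.1}) :
    ∀ U : Set (EC R M),
      TopologicalSpace.GenerateOpen {s | ∃ m ∈ Msharp R M, s = Uset R M m} U →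
      cls R M a ∈ U → cls R M b ∈ U := by
  intro U hU
  induction hU with
  | basic s hs =>
    obtain ⟨k, hk, rfl⟩ := hs
    rintro ⟨n, hn, hkn⟩
    have hsp : Submodule.span R {n.1} = Submodule.span R {a.1} :=
      (cls_eq_iff R M n a).1 hn
    refine ⟨b, rfl, ?_⟩
    have hka : k ∈ Submodule.span R {a.1} := hsp ▸ hkn
    exact (Submodule.span_singleton_le_iff_mem _ _).2 hab hka
  | univ => intro _; trivial
  | inter s t _ _ ihs iht => exact fun h => ⟨ihs h.1, iht h.2⟩
  | sUnion S _ ih => rintro ⟨s, hs, hmem⟩; exact ⟨s, hs, ih s hs hmem⟩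

/-- `D(M)` is a `T₁`-space iff `M` is a pseudo simple `R`-module. -/
theorem t1_iff_pseudoSimple [Nontrivial M] (hM : ¬ IsSimpleModule R M) :
    (@T1Space (EC R M) (divTop R M)) ↔ PseudoSimple R M := by
  letI := divTop R M
  constructor
  · intro hT1 m hm0 hmT
    rw [isSimpleModule_iff_isAtom]
    by_contra hatom
    have hbot : Submodule.span R {m} ≠ ⊥ := by
      simpa [Submodule.span_singleton_eq_bot] using hm0
    rw [IsAtom] at hatom
    push_neg at hatom
    obtain ⟨N, hNlt, hNbot⟩ := hatom hbot
    obtain ⟨x, hxN, hx0⟩ := (Submodule.ne_bot_iff N).1 hNbot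
    have hxlt : Submodule.span R {x} < Submodule.span R {m} :=
      lt_of_le_of_lt ((Submodule.span_singleton_le_iff_mem _ _).2 hxN) hNlt
    have hxT : Submodule.span R {x} ≠ ⊤ := fun h => hmT (top_le_iff.1 (h ▸ hxlt.le))
    set a : Msharp R M := ⟨x, hx0, hxT⟩
    set b : Msharp R M := ⟨m, hm0, hmT⟩
    have hne : cls R M a ≠ cls R M b := fun h => hxlt.ne ((cls_eq_iff R M a b).1 h)
    have hmem : a.1 ∈ Submodule.span R {b.1} :=
      hxlt.le (Submodule.mem_span_singleton_self x)
    have hopen : IsOpen ({cls R M b}ᶜ : Set (EC R M)) :=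
      (isClosed_singleton (x := cls R M b)).isOpen_compl
    have : cls R M b ∈ ({cls R M b}ᶜ : Set (EC R M)) :=
      openUp R M a b hmem _ hopen hne
    exact this rfl
  · intro hps
    have hsing : ∀ n : Msharp R M, Uset R M n.1 = {cls R M n} := by
      intro n
      ext c
      constructor
      · rintro ⟨k, rfl, hnk⟩
        have hatom : IsAtom (Submodule.span R {k.1}) :=
          isSimpleModule_iff_isAtom.1 (hps k.1 k.2.1 k.2.2)
        have hle : Submodule.span R {n.1} ≤ Submodule.span R {k.1} :=
          (Submodule.span_singleton_le_iff_mem _ _).2 hnk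
        have hnb : Submodule.span R {n.1} ≠ ⊥ := by
          simpa [Submodule.span_singleton_eq_bot] using n.2.1
        have heq : Submodule.span R {n.1} = Submodule.span R {k.1} := by
          rcases lt_or_eq_of_le hle with h | h
          · exact absurd (hatom.2 _ h) hnb
          · exact h
        exact Set.mem_singleton_iff.2 ((cls_eq_iff R M k n).2 heq.symm)
      · rintro rfl
        exact ⟨n, rfl, Submodule.mem_span_singleton_self n.1⟩
    have hopen : ∀ n : Msharp R M, IsOpen ({cls R M n} : Set (EC R M)) := by
      intro n
      rw [← hsing n]
      exact TopologicalSpace.GenerateOpen.basic _ ⟨n.1, n.2, rfl⟩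
    refine ⟨fun c => ?_⟩
    rw [← isOpen_compl_iff]
    rw [isOpen_iff_forall_mem_open]
    intro d hd
    obtain ⟨n, rfl⟩ := Quotient.exists_rep d
    exact ⟨{cls R M n}, Set.singleton_subset_iff.2 hd, hopen n, rfl⟩
end

section
/- Let M be a module over an integral domain R. If the divisor topology D(M) is compact, then the socle of M is finitely generated and is an essential submodule of M; in particular, M is finitely cogenerated. -/
open Submodule

variable (R M : Type) [CommRing R] [IsDomain R] [AddCommGroup M] [Module R M]

/-- Key consequence of compactness: a finite set `t` of elements of `M^#` such that
every nonzero `x` "divides" some member of `t`. -/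
theorem key_lemma [Nontrivial M] (hM : ¬ IsSimpleModule R M)
    (hc : @CompactSpace (EC R M) (divTop R M)) :
    ∃ t : Finset (Msharp R M), t.Nonempty ∧
      ∀ x : M, x ≠ 0 → ∃ n ∈ t, (n : M) ∈ Submodule.span R {x} := by
  letI := divTop R M
  -- `M^#` is nonempty since `M` is not simple
  obtain ⟨m₀, hm₀⟩ : ∃ m : M, m ∈ Msharp R M := by
    by_contra h
    push_neg at h
    apply hM
    refine { eq_bot_or_eq_top := fun N => ?_ }
    rcases eq_or_ne N ⊥ with hN | hN
    · exact Or.inl hN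
    · right
      obtain ⟨x, hxN, hx0⟩ := (Submodule.ne_bot_iff N).1 hN
      have hxtop : Submodule.span R {x} = ⊤ := by
        by_contra htop
        exact h x ⟨hx0, htop⟩
      exact top_unique (hxtop ▸ Submodule.span_le.2 (Set.singleton_subset_iff.2 hxN))
  -- the basic opens cover
  have hopen : ∀ n : Msharp R M, IsOpen (Uset R M n.1) := fun n =>
    TopologicalSpace.isOpen_generateFrom_of_mem ⟨n.1, n.2, rfl⟩
  have hcov : (Set.univ : Set (EC R M)) ⊆ ⋃ n : Msharp R M, Uset R M n.1 := by
    intro c _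
    obtain ⟨n, rfl⟩ := Quotient.exists_rep c
    exact Set.mem_iUnion.2 ⟨n, n, rfl, Submodule.mem_span_singleton_self _⟩
  obtain ⟨t, ht⟩ := IsCompact.elim_finite_subcover isCompact_univ _ hopen hcov
  -- `t` is nonempty
  have htne : t.Nonempty := by
    have := ht (Set.mem_univ (cls R M ⟨m₀, hm₀⟩))
    obtain ⟨n, hn, -⟩ := Set.mem_iUnion₂.1 this
    exact ⟨n, hn⟩
  refine ⟨t, htne, fun x hx0 => ?_⟩
  by_cases hxtop : Submodule.span R {x} = ⊤
  · obtain ⟨n, hn⟩ := htne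
    exact ⟨n, hn, by rw [hxtop]; trivial⟩
  · have hx : x ∈ Msharp R M := ⟨hx0, hxtop⟩
    have := ht (Set.mem_univ (cls R M ⟨x, hx⟩))
    obtain ⟨n, hn, n', hn', hmem⟩ := Set.mem_iUnion₂.1 this
    have hspan : Submodule.span R {n'.1} = Submodule.span R {x} :=
      Quotient.exact hn'
    exact ⟨n, hn, hspan ▸ hmem⟩

/-- If `D(M)` is compact, then `Soc(M)` is finitely generated and essential;
in particular `M` is finitely cogenerated. -/
theorem compact_implies_finitely_cogenerated [Nontrivial M]
    (hM : ¬ IsSimpleModule R M)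
    (hc : @CompactSpace (EC R M) (divTop R M)) :
    (sSup {N : Submodule R M | IsSimpleModule R N}).FG ∧
    (∀ L : Submodule R M,
      sSup {N : Submodule R M | IsSimpleModule R N} ⊓ L = ⊥ → L = ⊥) ∧
    (∀ (ι : Type) (f : ι → Submodule R M), (⨅ i, f i) = ⊥ →
      ∃ s : Finset ι, (⨅ i ∈ s, f i) = ⊥) := by
  classical
  obtain ⟨t, htne, ht⟩ := key_lemma R M hM hc
  -- every nonzero submodule contains some member of `t`
  have hsub : ∀ L : Submodule R M, L ≠ ⊥ → ∃ n ∈ t, (n : M) ∈ L := by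
    intro L hL
    obtain ⟨x, hxL, hx0⟩ := (Submodule.ne_bot_iff L).1 hL
    obtain ⟨n, hn, hmem⟩ := ht x hx0
    exact ⟨n, hn, Submodule.span_le.2 (Set.singleton_subset_iff.2 hxL) hmem⟩
  -- every nonzero submodule contains an atom of the form `span {n}`, `n ∈ t`
  have hx_atom : ∀ L : Submodule R M, L ≠ ⊥ →
      ∃ n ∈ t, IsAtom (Submodule.span R {(n : M)}) ∧ Submodule.span R {(n : M)} ≤ L := by
    intro L hL
    set s : Finset (Submodule R M) :=
      (t.filter (fun n : Msharp R M => (n : M) ∈ L)).image (fun n : Msharp R M => Submodule.span R {(n : M)}) with hs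
    have hsne : s.Nonempty := by
      obtain ⟨n, hn, hnL⟩ := hsub L hL
      exact ⟨_, Finset.mem_image.2 ⟨n, Finset.mem_filter.2 ⟨hn, hnL⟩, rfl⟩⟩
    obtain ⟨P, hPs, hPmin⟩ := s.exists_minimal hsne
    obtain ⟨n₀, hn₀, rfl⟩ := Finset.mem_image.1 hPs
    have hn₀t := (Finset.mem_filter.1 hn₀).1
    have hn₀L := (Finset.mem_filter.1 hn₀).2
    have hleL : Submodule.span R {(n₀ : M)} ≤ L :=
      Submodule.span_le.2 (Set.singleton_subset_iff.2 hn₀L)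
    refine ⟨n₀, hn₀t, ⟨?_, ?_⟩, hleL⟩
    · simpa [Submodule.span_singleton_eq_bot] using n₀.2.1
    · intro Q hQ
      by_contra hQ0
      obtain ⟨n₁, hn₁, hn₁Q⟩ := hsub Q hQ0
      have h1 : Submodule.span R {(n₁ : M)} ≤ Q :=
        Submodule.span_le.2 (Set.singleton_subset_iff.2 hn₁Q)
      have h1L : (n₁ : M) ∈ L := hleL (hQ.le hn₁Q)
      exact lt_irrefl _ (lt_of_lt_of_le (lt_of_le_of_lt h1 hQ)
        (hPmin (Finset.mem_image.2 ⟨n₁, Finset.mem_filter.2 ⟨hn₁, h1L⟩, rfl⟩) (lt_of_le_of_lt h1 hQ).le))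
  -- simple submodules are atoms
  have hsimple_iff : ∀ N : Submodule R M, IsSimpleModule R N ↔ IsAtom N := fun N =>
    isSimpleModule_iff_isAtom
  -- every atom is of the form `span {n}` with `n ∈ t`
  have hrep : ∀ N : Submodule R M, IsAtom N → ∃ n ∈ t, N = Submodule.span R {(n : M)} := by
    intro N hN
    obtain ⟨n, hn, hat, hle⟩ := hx_atom N hN.1
    rcases hle.lt_or_eq with hlt | heq
    · exact absurd (hN.2 _ hlt) hat.1
    · exact ⟨n, hn, heq.symm⟩
  refine ⟨?_, ?_, ?_⟩
  · -- FG
    refine ⟨(t.filter (fun n : Msharp R M => IsAtom (Submodule.span R {(n : M)}))).image Subtype.val, ?_⟩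
    apply le_antisymm
    · rw [Submodule.span_le]
      intro x hx
      obtain ⟨n, hn, rfl⟩ := Finset.mem_image.1 hx
      have hat := (Finset.mem_filter.1 hn).2
      have hmem : Submodule.span R {(n : M)} ≤ sSup {N : Submodule R M | IsSimpleModule R N} :=
        le_sSup ((hsimple_iff _).2 hat)
      exact hmem (Submodule.mem_span_singleton_self _)
    · apply sSup_le
      intro N hN
      obtain ⟨n, hn, rfl⟩ := hrep N ((hsimple_iff N).1 hN)
      have hat : IsAtom (Submodule.span R {(n : M)}) := (hsimple_iff _).1 hN
      apply Submodule.span_le.2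
      intro y hy
      rcases hy with rfl
      apply Submodule.subset_span
      exact Finset.mem_coe.2 (Finset.mem_image.2 ⟨n, Finset.mem_filter.2 ⟨hn, hat⟩, rfl⟩)
  · -- essential
    intro L hL
    by_contra hL0
    obtain ⟨n, _, hat, hle⟩ := hx_atom L hL0
    have h1 : Submodule.span R {(n : M)} ≤ sSup {N : Submodule R M | IsSimpleModule R N} :=
      le_sSup ((hsimple_iff _).2 hat)
    have : Submodule.span R {(n : M)} ≤ ⊥ := hL ▸ le_inf h1 hle
    exact hat.1 (le_bot_iff.1 this)
  · -- finitely cogenerated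
    intro ι f hf
    have hchoice : ∀ n : {n // n ∈ t}, ∃ i, ((n : Msharp R M) : M) ∉ f i := by
      intro n
      by_contra h
      push_neg at h
      have hmem : ((n : Msharp R M) : M) ∈ ⨅ i, f i := (Submodule.mem_iInf _).2 h
      rw [hf, Submodule.mem_bot] at hmem
      exact (n : Msharp R M).2.1 hmem
    choose g hg using hchoice
    refine ⟨t.attach.image g, ?_⟩
    by_contra hK
    obtain ⟨n, hn, hnK⟩ := hsub _ hK
    have hgs : g ⟨n, hn⟩ ∈ t.attach.image g :=
      Finset.mem_image.2 ⟨⟨n, hn⟩, Finset.mem_attach _ _, rfl⟩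
    have : (⨅ i ∈ t.attach.image g, f i) ≤ f (g ⟨n, hn⟩) := by
      exact biInf_le f hgs
    exact hg ⟨n, hn⟩ (this hnK)
end

section
/- Let M be a module over an integral domain R. The following are equivalent: (i) M is pseudo simple; (ii) M satisfies the (*)-condition (whenever m₁, m₂ ∈ M^# with Rm₁ ≠ Rm₂ and Rm₁ + Rm₂ ⊆ Rx, then Rx = M); (iii) D(M) is a discrete space; (iv) D(M) is Hausdorff; (v) D(M) is T1. -/
open Submodule

variable (R M : Type) [CommRing R] [IsDomain R] [AddCommGroup M] [Module R M]

lemma gen_open_mem {α : Type*} {B : Set (Set α)} {a b : α}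
    (hb : ∀ t ∈ B, a ∈ t → b ∈ t) :
    ∀ {s : Set α}, TopologicalSpace.GenerateOpen B s → a ∈ s → b ∈ s := by
  intro s h
  induction h with
  | basic t ht => exact hb t ht
  | univ => exact fun _ => trivial
  | inter t₁ t₂ _ _ ih₁ ih₂ => exact fun ⟨h1, h2⟩ => ⟨ih₁ h1, ih₂ h2⟩
  | sUnion S _ ih => exact fun ⟨t, htS, hat⟩ => ⟨t, htS, ih t htS hat⟩

/-- TFAE: `M` pseudo simple; `M` satisfies the `(∗)`-condition; `D(M)` discrete;
`D(M)` Hausdorff; `D(M)` is `T₁`. -/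
theorem pseudoSimple_tfae [Nontrivial M] (hM : ¬ IsSimpleModule R M) :
    [PseudoSimple R M,
     ∀ m₁ m₂ : M, m₁ ∈ Msharp R M → m₂ ∈ Msharp R M →
       Submodule.span R {m₁} ≠ Submodule.span R {m₂} →
       ∀ x : M, Submodule.span R {m₁} ⊔ Submodule.span R {m₂} ≤ Submodule.span R {x} →
         Submodule.span R {x} = ⊤,
     @DiscreteTopology (EC R M) (divTop R M),
     @T2Space (EC R M) (divTop R M),
     @T1Space (EC R M) (divTop R M)].TFAE := by
  tfae_have 1 → 2 := by
    intro h m₁ m₂ hm₁ hm₂ hne x hx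
    by_contra hxtop
    have hx₁ : Submodule.span R {m₁} ≤ Submodule.span R {x} := le_trans le_sup_left hx
    have hx₂ : Submodule.span R {m₂} ≤ Submodule.span R {x} := le_trans le_sup_right hx
    have hx0 : x ≠ 0 := by
      rintro rfl
      have hb : Submodule.span R {m₁} = ⊥ := le_bot_iff.1 (by simpa using hx₁)
      exact hm₁.1 (Submodule.span_singleton_eq_bot.1 hb)
    have hsimp := h x hx0 hxtop
    have hatom : IsAtom (Submodule.span R {x}) := (isSimpleModule_iff_isAtom).1 hsimp
    have h₁ : Submodule.span R {m₁} = Submodule.span R {x} := by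
      rcases hatom.le_iff.1 hx₁ with h | h
      · exact absurd (Submodule.span_singleton_eq_bot.1 h) hm₁.1
      · exact h
    have h₂ : Submodule.span R {m₂} = Submodule.span R {x} := by
      rcases hatom.le_iff.1 hx₂ with h | h
      · exact absurd (Submodule.span_singleton_eq_bot.1 h) hm₂.1
      · exact h
    exact hne (h₁.trans h₂.symm)
  tfae_have 2 → 1 := by
    intro h m hm0 hmtop
    rw [isSimpleModule_iff_isAtom]
    constructor
    · exact fun hb => hm0 (Submodule.span_singleton_eq_bot.1 hb)
    · intro N hN
      by_contra hNbot
      obtain ⟨n, hnN, hn0⟩ := (Submodule.ne_bot_iff N).1 hNbot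
      have hnle : Submodule.span R {n} ≤ N := (Submodule.span_singleton_le_iff_mem n N).2 hnN
      have hnm : Submodule.span R {n} ≤ Submodule.span R {m} := le_trans hnle hN.le
      have hntop : Submodule.span R {n} ≠ ⊤ := fun ht => hmtop (top_le_iff.1 (ht ▸ hnm))
      have hne : Submodule.span R {n} ≠ Submodule.span R {m} := by
        intro he
        exact hN.ne (le_antisymm hN.le (he ▸ hnle))
      exact hmtop (h n m ⟨hn0, hntop⟩ ⟨hm0, hmtop⟩ hne m
        (sup_le hnm le_rfl))
  tfae_have 2 → 3 := by
    intro h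
    letI := divTop R M
    apply discreteTopology_iff_isOpen_singleton.mpr
    intro c
    induction c using Quotient.ind with
    | _ n =>
      have key : Uset R M n.1 = {cls R M n} := by
        ext c
        constructor
        · rintro ⟨n', rfl, hmem⟩
          have hle : Submodule.span R {n.1} ≤ Submodule.span R {n'.1} :=
            (Submodule.span_singleton_le_iff_mem _ _).2 hmem
          have heq : Submodule.span R {n'.1} = Submodule.span R {n.1} := by
            by_contra hne
            exact n'.2.2 (h n'.1 n.1 n'.2 n.2 hne n'.1 (sup_le le_rfl hle))
          exact Set.mem_singleton_iff.2 ((cls_eq_iff R M n' n).2 heq)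
        · rintro rfl
          exact ⟨n, rfl, Submodule.mem_span_singleton_self _⟩
      have : IsOpen (Uset R M n.1) :=
        TopologicalSpace.GenerateOpen.basic _ ⟨n.1, n.2, rfl⟩
      rw [key] at this
      exact this
  tfae_have 3 → 4 := by
    intro h
    letI := divTop R M
    haveI := h
    infer_instance
  tfae_have 4 → 5 := by
    intro h
    letI := divTop R M
    haveI := h
    infer_instance
  tfae_have 5 → 2 := by
    intro h m₁ m₂ hm₁ hm₂ hne x hx
    by_contra hxtop
    letI := divTop R M
    haveI := h
    have hx₁ : Submodule.span R {m₁} ≤ Submodule.span R {x} := le_trans le_sup_left hx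
    have hx₂ : Submodule.span R {m₂} ≤ Submodule.span R {x} := le_trans le_sup_right hx
    have hx0 : x ≠ 0 := by
      rintro rfl
      have hb : Submodule.span R {m₁} = ⊥ := le_bot_iff.1 (by simpa using hx₁)
      exact hm₁.1 (Submodule.span_singleton_eq_bot.1 hb)
    set xs : Msharp R M := ⟨x, hx0, hxtop⟩ with hxs
    have key : ∀ (ms : Msharp R M), Submodule.span R {ms.1} ≤ Submodule.span R {x} →
        cls R M ms = cls R M xs := by
      intro ms hms
      by_contra hc
      have hopen : IsOpen ({cls R M xs}ᶜ : Set (EC R M)) := (isClosed_singleton).isOpen_compl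
      have hbasic : ∀ t ∈ {s | ∃ m ∈ Msharp R M, s = Uset R M m},
          cls R M ms ∈ t → cls R M xs ∈ t := by
        rintro t ⟨a, ha, rfl⟩ ⟨n', hn', hmem⟩
        have : Submodule.span R {n'.1} = Submodule.span R {ms.1} := (cls_eq_iff R M n' ms).1 hn'
        have haRx : a ∈ Submodule.span R {x} := hms (this ▸ hmem)
        exact ⟨xs, rfl, haRx⟩
      have : cls R M xs ∈ ({cls R M xs}ᶜ : Set (EC R M)) :=
        gen_open_mem hbasic hopen hc
      exact this rfl
    have h₁ := (cls_eq_iff R M ⟨m₁, hm₁⟩ xs).1 (key ⟨m₁, hm₁⟩ hx₁)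
    have h₂ := (cls_eq_iff R M ⟨m₂, hm₂⟩ xs).1 (key ⟨m₂, hm₂⟩ hx₂)
    exact hne (h₁.trans h₂.symm)
  tfae_finish
end
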